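/- Let F_q be a finite field of odd characteristic and let h, s be positive integers such that h − 1 divides q − 1, 1 − h is a square in F_q, and s ≤ h < 2s. Let C_1,…,C_s be nonzero linear codes in F_q^m with dim(C_i) = k_i and minimum distance d_i, satisfying C_{h−s+1} ⊇ C_{h−s+2} ⊇ ⋯ ⊇ C_s ⊇ C_s^{⊥E}, and C_1 = ⋯ = C_{h−s} = F_q^m whenever s < h. Then there exists a non-singular by columns (NSC) s×h matrix Ȧ over F_q such that the matrix-product code C = [C_1,…,C_s]·Ȧ is Euclidean dual-containing, has length hm, dimension Σ_{i=1}^s k_i, and minimum distance d(C) ≥ min{ h d_1, (h−1) d_2, …, (h+1−s) d_s }. -/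

import Mathlib

/-- Minimum distance (minimum Hamming weight of a nonzero element) of a set of vectors. -/
noncomputable def dminS {F : Type*} [DecidableEq F] [Zero F] {n : Type*} [Fintype n]
    (C : Set (n → F)) : ℕ :=
  sInf { w | ∃ c ∈ C, c ≠ 0 ∧ hammingNorm c = w }

/-- Euclidean dual of a set of vectors. -/
def dualE {F : Type*} [Field F] {n : Type*} [Fintype n] (C : Set (n → F)) : Set (n → F) :=
  { x | ∀ c ∈ C, ∑ j, x j * c j = 0 }

/-- Hermitian dual (with respect to x ↦ x^q) of a set of vectors over F_{q^2}. -/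
def dualH {F : Type*} [Field F] {n : Type*} [Fintype n] (q : ℕ) (C : Set (n → F)) :
    Set (n → F) :=
  { x | ∀ c ∈ C, ∑ j, x j * (c j) ^ q = 0 }

/-- The matrix-product code `[C_1,…,C_s]·A` as a set of vectors indexed by `Fin h × Fin m`. -/
def mpcSet {F : Type*} [Field F] {s h m : ℕ}
    (C : Fin s → Set (Fin m → F)) (A : Matrix (Fin s) (Fin h) F) :
    Set (Fin h × Fin m → F) :=
  { p | ∃ v : Fin s → Fin m → F, (∀ i, v i ∈ C i) ∧ ∀ x, p x = ∑ i, A i x.1 * v i x.2 }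

/-- A matrix is non-singular by columns. -/
def IsNSC {F : Type*} [Field F] {s h : ℕ} (A : Matrix (Fin s) (Fin h) F) : Prop :=
  ∀ (i : ℕ) (hi : i ≤ s), 0 < i → ∀ c : Fin i → Fin h, StrictMono c →
    (Matrix.of fun r t : Fin i => A (Fin.castLE hi r) (c t)).det ≠ 0

/-- Punctured code: projection of `C` onto the coordinates in `R`. -/
def punct {F : Type*} {n : Type*} (C : Set (n → F)) (R : Finset n) :
    Set ({x // x ∈ R} → F) :=
  (fun c (t : {x // x ∈ R}) => c t.1) '' C

/-- `R` is an (r,δ)-extended recovery set for coordinate `i` of the code `C`. -/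
def IsRecSet {F : Type*} [DecidableEq F] [Zero F] {n : Type*} [Fintype n]
    (C : Set (n → F)) (r δ : ℕ) (i : n) (R : Finset n) : Prop :=
  i ∈ R ∧ R.card ≤ r + δ - 1 ∧ δ ≤ dminS (punct C R)

/-- `C` is a locally recoverable code with locality (r,δ). -/
def IsLRC {F : Type*} [DecidableEq F] [Zero F] {n : Type*} [Fintype n]
    (C : Set (n → F)) (r δ : ℕ) : Prop :=
  ∀ i : n, ∃ R : Finset n, IsRecSet C r δ i R

/-- `wv α i` is the evaluation of the monomial `X^(i-1)` at all points of the field,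
enumerated by `α`. -/
def wv {F : Type*} [Field F] {q : ℕ} (α : Fin q ≃ F) (i : ℕ) : Fin q → F :=
  fun j => (α j) ^ (i - 1)

/-- `av α p i` : the vectors `a_i`, with `a_i = w_i` for `i < q` and
`a_q = w_q + ((p-1)/2) • w_1`. -/
def av {F : Type*} [Field F] {q : ℕ} (α : Fin q ≃ F) (p : ℕ) (i : ℕ) : Fin q → F :=
  if i = q then wv α q + (((p - 1) / 2 : ℕ) : F) • wv α 1 else wv α i

/-- The square matrix whose rows are `a_1, …, a_q`. -/
def Adot {F : Type*} [Field F] {q : ℕ} (α : Fin q ≃ F) (p : ℕ) : Matrix (Fin q) (Fin q) F :=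
  Matrix.of fun r j => av α p ((r : ℕ) + 1) j

namespace Stmt12Aux

open Matrix

/-- restrict a `Fin` sum when the tail terms vanish. -/
lemma sum_castLE {M : Type*} [AddCommMonoid M] {a b : ℕ} (hab : a ≤ b) (f : Fin b → M)
    (hf : ∀ i : Fin b, a ≤ (i : ℕ) → f i = 0) :
    ∑ i, f i = ∑ i : Fin a, f (Fin.castLE hab i) := by
  classical
  let g : ℕ → M := fun n => if hn : n < b then f ⟨n, hn⟩ else 0
  have h1 : ∑ i : Fin b, f i = ∑ n ∈ Finset.range b, g n := by
    rw [← Fin.sum_univ_eq_sum_range]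
    refine Finset.sum_congr rfl fun i _ => ?_
    simp only [g, dif_pos i.isLt]
  have h2 : ∑ i : Fin a, f (Fin.castLE hab i) = ∑ n ∈ Finset.range a, g n := by
    rw [← Fin.sum_univ_eq_sum_range]
    refine Finset.sum_congr rfl fun i _ => ?_
    simp only [g, dif_pos (lt_of_lt_of_le i.isLt hab)]
    rfl
  rw [h1, h2]
  exact (Finset.sum_subset (Finset.range_subset_range.mpr hab) (fun n hn hna => by
    simp only [Finset.mem_range] at hn hna
    simp only [g, dif_pos hn]
    exact hf ⟨n, hn⟩ (not_lt.mp hna))).symm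

lemma sum_two {n : ℕ} {M : Type*} [AddCommMonoid M] (f : Fin n → M) (i j : Fin n)
    (hij : i ≠ j) (h0 : ∀ k, k ≠ i → k ≠ j → f k = 0) : ∑ k, f k = f i + f j := by
  classical
  rw [← Finset.sum_subset (Finset.subset_univ ({i, j} : Finset (Fin n)))
    (fun k _ hk => by
      simp only [Finset.mem_insert, Finset.mem_singleton, not_or] at hk
      exact h0 k hk.1 hk.2)]
  exact Finset.sum_pair hij

variable {F : Type*} [Field F]

lemma dualE_antitone {n : Type*} [Fintype n] {C D : Set (n → F)} (h : C ⊆ D) :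
    dualE D ⊆ dualE C := fun _ hx c hc => hx c (h hc)

lemma dualE_top {n : Type*} [Fintype n] [DecidableEq n]
    {x : n → F} (hx : x ∈ dualE ((⊤ : Submodule F (n → F)) : Set (n → F))) : x = 0 := by
  funext y
  have := hx (Pi.single y 1) trivial
  simpa [Pi.single_apply, mul_ite, Finset.sum_ite_eq'] using this

/-- The extended code family. -/
def Cb {m s h : ℕ} (C : Fin s → Submodule F (Fin m → F)) (k : Fin h) :
    Submodule F (Fin m → F) :=
  if hk : (k : ℕ) < s then C ⟨k, hk⟩ else ⊥

lemma Cb_castLE {m s h : ℕ} (hsh : s ≤ h) (C : Fin s → Submodule F (Fin m → F)) (i : Fin s) :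
    Cb C (Fin.castLE hsh i) = C i := by
  have hi : ((Fin.castLE hsh i : Fin h) : ℕ) < s := i.isLt
  simp only [Cb, dif_pos hi]
  exact congrArg C (Fin.ext rfl)

lemma Cb_bot {m s h : ℕ} (C : Fin s → Submodule F (Fin m → F)) (k : Fin h)
    (hk : ¬ (k : ℕ) < s) : Cb C k = ⊥ := dif_neg hk

/-- The submodule of sequences in the product of the extended family. -/
lemma workhorse {m s h : ℕ} (hs : 0 < s) (hsh : s ≤ h)
    (C : Fin s → Submodule F (Fin m → F))
    (Abar B T : Matrix (Fin h) (Fin h) F)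
    (hAB : Abar * B = 1)
    (hTM : T * (Abar * Abarᵀ) = 1)
    (hpat : ∀ k i : Fin h, T k i ≠ 0 →
      dualE ((Cb C i : Set (Fin m → F))) ⊆ ((Cb C k : Submodule F (Fin m → F)) : Set (Fin m → F)))
    (A : Matrix (Fin s) (Fin h) F) (hA : ∀ i j, A i j = Abar (Fin.castLE hsh i) j) :
    ∃ S : Submodule F (Fin h × Fin m → F),
      (S : Set (Fin h × Fin m → F)) = mpcSet (fun i => ((C i : Set (Fin m → F)))) A ∧
      dualE (S : Set (Fin h × Fin m → F)) ⊆ (S : Set (Fin h × Fin m → F)) ∧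
      Module.finrank F S = ∑ i, Module.finrank F (C i) := by
  classical
  set Φ : (Fin h → Fin m → F) →ₗ[F] (Fin h × Fin m → F) :=
    { toFun := fun u x => ∑ k, Abar k x.1 * u k x.2
      map_add' := by
        intro u v; funext x
        simp [Pi.add_apply, mul_add, Finset.sum_add_distrib]
      map_smul' := by
        intro c u; funext x
        simp only [Pi.smul_apply, smul_eq_mul, RingHom.id_apply]
        rw [Finset.mul_sum]
        exact Finset.sum_congr rfl fun k _ => by ring } with hΦdef
  have hΦapp : ∀ u x, Φ u x = ∑ k, Abar k x.1 * u k x.2 := fun u x => rfl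
  set P : Submodule F (Fin h → Fin m → F) := Submodule.pi Set.univ (Cb C) with hP
  have hPmem : ∀ u, u ∈ P ↔ ∀ k, u k ∈ Cb C k := fun u => by
    simp [hP, Submodule.mem_pi]
  refine ⟨P.map Φ, ?_, ?_, ?_⟩
  · -- set equality
    ext p
    constructor
    · rintro ⟨u, hu, rfl⟩
      refine ⟨fun i => u (Fin.castLE hsh i), fun i => ?_, fun x => ?_⟩
      · show u (Fin.castLE hsh i) ∈ (C i : Set (Fin m → F))
        have := (hPmem u).mp hu (Fin.castLE hsh i)
        rwa [Cb_castLE hsh] at this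
      · rw [hΦapp]
        rw [sum_castLE hsh (fun k => Abar k x.1 * u k x.2) (fun k hk => by
          have : u k = 0 := by
            have := (hPmem u).mp hu k
            rwa [Cb_bot C k (not_lt.mpr hk), Submodule.mem_bot] at this
          simp [this])]
        exact Finset.sum_congr rfl fun i _ => by rw [hA]
    · rintro ⟨v, hv, hp⟩
      refine ⟨fun k => if hk : (k : ℕ) < s then v ⟨k, hk⟩ else 0, (hPmem _).mpr fun k => ?_, ?_⟩
      · by_cases hk : (k : ℕ) < s
        · simp only [dif_pos hk, Cb]
          exact hv ⟨k, hk⟩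
        · simp only [dif_neg hk, Cb]
          exact Submodule.zero_mem _
      · funext x
        rw [hΦapp, hp x]
        rw [sum_castLE hsh (fun k => Abar k x.1 *
            (if hk : (k : ℕ) < s then v ⟨k, hk⟩ else 0) x.2) (fun k hk => by
          simp [dif_neg (not_lt.mpr hk)])]
        refine (Finset.sum_congr rfl fun i _ => ?_).symm
        have hi : ((Fin.castLE hsh i : Fin h) : ℕ) < s := i.isLt
        rw [hA, dif_pos hi]
        congr 1
  · -- dual containing
    intro x hx
    have hBA : B * Abar = 1 := mul_eq_one_comm.mp hAB
    set w : Fin h → Fin m → F := fun k y => ∑ j, x (j, y) * B j k with hwdef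
    have hxw : Φ w = x := by
      funext z
      obtain ⟨j, y⟩ := z
      rw [hΦapp]
      have : ∀ k, Abar k j * w k y = ∑ j', x (j', y) * (B j' k * Abar k j) := by
        intro k
        show Abar k j * ∑ j', x (j', y) * B j' k = _
        rw [Finset.mul_sum]
        exact Finset.sum_congr rfl fun j' _ => by ring
      rw [Finset.sum_congr rfl fun k _ => this k, Finset.sum_comm]
      have : ∀ j', ∑ k, x (j', y) * (B j' k * Abar k j) = x (j', y) *
          (1 : Matrix (Fin h) (Fin h) F) j' j := by
        intro j'
        rw [← hBA, Matrix.mul_apply, Finset.mul_sum]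
      rw [Finset.sum_congr rfl fun j' _ => this j']
      simp [Matrix.one_apply, mul_ite, Finset.sum_ite_eq]
    set z : Fin h → Fin m → F := fun i y => ∑ j, Abar i j * x (j, y) with hzdef
    have hzdual : ∀ i, z i ∈ dualE ((Cb C i : Set (Fin m → F))) := by
      intro i ci hci
      set u : Fin h → Fin m → F := fun k => if k = i then ci else 0 with hudef
      have humem : u ∈ P := by
        rw [hPmem]
        intro k
        by_cases hk : k = i
        · subst hk; simpa [hudef] using hci
        · simp [hudef, hk, Submodule.zero_mem]
      have h0 := hx (Φ u) ⟨u, humem, rfl⟩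
      have hΦu : ∀ j y, Φ u (j, y) = Abar i j * ci y := by
        intro j y
        rw [hΦapp]
        simp [hudef, ite_apply, mul_ite, Finset.sum_ite_eq]
      rw [Fintype.sum_prod_type] at h0
      have h1 : ∀ j : Fin h, ∑ y, x (j, y) * Φ u (j, y) =
          ∑ y, Abar i j * (x (j, y) * ci y) := by
        intro j
        exact Finset.sum_congr rfl fun y _ => by rw [hΦu]; ring
      rw [Finset.sum_congr rfl fun j _ => h1 j, Finset.sum_comm] at h0
      calc ∑ y, z i y * ci y = ∑ y, ∑ j, Abar i j * (x (j, y) * ci y) := by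
            refine Finset.sum_congr rfl fun y _ => ?_
            simp only [hzdef, Finset.sum_mul]
            exact Finset.sum_congr rfl fun j _ => by ring
        _ = 0 := h0
    have hz2 : ∀ i y, z i y = ∑ l, (Abar * Abarᵀ) i l * w l y := by
      intro i y
      have : ∀ j, Abar i j * x (j, y) = ∑ l, Abar i j * (Abar l j * w l y) := by
        intro j
        conv_lhs => rw [← hxw]
        rw [hΦapp, Finset.mul_sum]
      simp only [hzdef]
      rw [Finset.sum_congr rfl fun j _ => this j, Finset.sum_comm]
      refine Finset.sum_congr rfl fun l _ => ?_
      rw [Matrix.mul_apply, Finset.sum_mul]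
      exact Finset.sum_congr rfl fun j _ => by simp [Matrix.transpose_apply]; ring
    have hwz : ∀ k, w k = ∑ i, T k i • z i := by
      intro k
      funext y
      rw [Finset.sum_apply]
      simp only [Pi.smul_apply, smul_eq_mul]
      have : ∀ i, T k i * z i y = ∑ l, T k i * ((Abar * Abarᵀ) i l * w l y) := by
        intro i
        rw [hz2, Finset.mul_sum]
      rw [Finset.sum_congr rfl fun i _ => this i, Finset.sum_comm]
      have : ∀ l, ∑ i, T k i * ((Abar * Abarᵀ) i l * w l y) =
          (T * (Abar * Abarᵀ)) k l * w l y := by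
        intro l
        rw [Matrix.mul_apply, Finset.sum_mul]
        exact Finset.sum_congr rfl fun i _ => by ring
      rw [Finset.sum_congr rfl fun l _ => this l, hTM]
      simp [Matrix.one_apply, ite_mul, Finset.sum_ite_eq]
    have hwmem : ∀ k, w k ∈ Cb C k := by
      intro k
      rw [hwz k]
      refine Submodule.sum_mem _ fun i _ => ?_
      by_cases hT : T k i = 0
      · simp [hT, Submodule.zero_mem]
      · exact Submodule.smul_mem _ _ (hpat k i hT (hzdual i))
    exact ⟨w, fun k _ => hwmem k, hxw⟩
  · -- finrank
    have hΦinj : Function.Injective Φ := by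
      rw [injective_iff_map_eq_zero]
      intro u hu
      funext k y
      have h1 : ∀ j, ∑ l, Abar l j * u l y = 0 := fun j => congrFun hu (j, y)
      have h2 : ∑ j, (∑ l, Abar l j * u l y) * B j k = 0 := by
        simp only [fun j => h1 j]; simp
      have h3 : ∑ j, (∑ l, Abar l j * u l y) * B j k =
          ∑ l, (Abar * B) l k * u l y := by
        simp only [Finset.sum_mul]
        rw [Finset.sum_comm]
        refine Finset.sum_congr rfl fun l _ => ?_
        rw [Matrix.mul_apply, Finset.sum_mul]
        exact Finset.sum_congr rfl fun j _ => by ring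
      rw [h3, hAB] at h2
      simpa [Matrix.one_apply, ite_mul, Finset.sum_ite_eq] using h2
    have e1 : (P.map Φ) ≃ₗ[F] P := (Submodule.equivMapOfInjective Φ hΦinj P).symm
    rw [LinearEquiv.finrank_eq e1]
    have e2 : P ≃ₗ[F] (∀ k : Fin h, Cb C k) :=
      { toFun := fun u k => ⟨u.1 k, u.2 k trivial⟩
        map_add' := fun u v => rfl
        map_smul' := fun c u => rfl
        invFun := fun v => ⟨fun k => v k, fun k _ => (v k).2⟩
        left_inv := fun u => rfl
        right_inv := fun v => rfl }
    rw [LinearEquiv.finrank_eq e2, Module.finrank_pi_fintype]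
    rw [sum_castLE hsh (fun k => Module.finrank F (Cb C k)) (fun k hk => by
      show Module.finrank F (Cb C k) = 0
      rw [Cb_bot C k (not_lt.mpr hk)]; exact finrank_bot F _)]
    exact Finset.sum_congr rfl fun i _ => by rw [Cb_castLE hsh]

section Concrete

variable {F : Type*} [Field F] {h' : ℕ} {ζ : F}

/-- evaluation nodes: `0, 1, ζ, ζ², …`. -/
def xnode (ζ : F) {h' : ℕ} : Fin (h' + 1) → F :=
  fun j => if j = 0 then 0 else ζ ^ ((j : ℕ) - 1)

/-- the square matrix `Ā`. -/
def AbarM (ζ c : F) (h' : ℕ) : Matrix (Fin (h'+1)) (Fin (h'+1)) F :=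
  Matrix.of fun r j => if (r : ℕ) = 0 then 1 + c * xnode ζ j ^ h' else xnode ζ j ^ (r : ℕ)

/-- the Gram matrix `Ā Āᵀ`. -/
def MexM (β lam : F) (h' : ℕ) : Matrix (Fin (h'+1)) (Fin (h'+1)) F :=
  Matrix.of fun r r' => if (r : ℕ) = 0 ∨ (r' : ℕ) = 0 then
      (if (r : ℕ) + (r' : ℕ) = h' then β else 0)
    else (if (r : ℕ) + (r' : ℕ) = h' ∨ ((r : ℕ) = h' ∧ (r' : ℕ) = h') then lam else 0)

/-- the inverse of the Gram matrix. -/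
def TMx (β lam : F) (h' : ℕ) : Matrix (Fin (h'+1)) (Fin (h'+1)) F :=
  Matrix.of fun a b => if (a : ℕ) = 0 ∧ (b : ℕ) = 0 then 1
    else if ((a : ℕ) = 0 ∧ (b : ℕ) = h') ∨ ((a : ℕ) = h' ∧ (b : ℕ) = 0) then -(β/lam)
    else if (a : ℕ) + (b : ℕ) = h' ∧ (a : ℕ) ≠ 0 ∧ (b : ℕ) ≠ 0 then lam⁻¹ else 0

lemma xnode_zero : xnode ζ (0 : Fin (h'+1)) = 0 := if_pos rfl

lemma xnode_succ (j : Fin h') : xnode ζ j.succ = ζ ^ (j : ℕ) := by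
  simp [xnode, Fin.succ_ne_zero, Fin.val_succ]

lemma xnode_pow_h' (hh' : 0 < h') (hζ : IsPrimitiveRoot ζ h') {j : Fin (h'+1)} (hj : j ≠ 0) :
    xnode ζ j ^ h' = 1 := by
  rw [xnode, if_neg hj, ← pow_mul, Nat.mul_comm, pow_mul, hζ.pow_eq_one, one_pow]

lemma xnode_ne_zero (hh' : 0 < h') (hζ : IsPrimitiveRoot ζ h') {j : Fin (h'+1)} (hj : j ≠ 0) :
    xnode ζ j ≠ 0 := by
  rw [xnode, if_neg hj]
  exact pow_ne_zero _ (hζ.ne_zero hh'.ne')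

lemma xnode_inj (hh' : 0 < h') (hζ : IsPrimitiveRoot ζ h') :
    Function.Injective (xnode ζ (h' := h')) := by
  intro a b hab
  by_cases ha : a = 0 <;> by_cases hb : b = 0
  · rw [ha, hb]
  · exact absurd (ha ▸ hab) (Ne.symm (by rw [xnode_zero]; exact xnode_ne_zero hh' hζ hb))
  · exact absurd (hb ▸ hab.symm) (Ne.symm (by rw [xnode_zero]; exact xnode_ne_zero hh' hζ ha))
  · rw [xnode, xnode, if_neg ha, if_neg hb] at hab
    have ha' : (a : ℕ) - 1 < h' := by
      have := a.isLt
      have : (a : ℕ) ≠ 0 := fun hc => ha (Fin.ext hc)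
      omega
    have hb' : (b : ℕ) - 1 < h' := by
      have := b.isLt
      have : (b : ℕ) ≠ 0 := fun hc => hb (Fin.ext hc)
      omega
    have := hζ.pow_inj ha' hb' hab
    have ha0 : (a : ℕ) ≠ 0 := fun hc => ha (Fin.ext hc)
    have hb0 : (b : ℕ) ≠ 0 := fun hc => hb (Fin.ext hc)
    exact Fin.ext (by omega)

lemma Nsum (hh' : 0 < h') (hζ : IsPrimitiveRoot ζ h') (e : ℕ) :
    ∑ j : Fin (h'+1), xnode ζ j ^ e
      = (if e = 0 then 1 else 0) + (if h' ∣ e then ((h' : ℕ) : F) else 0) := by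
  rw [Fin.sum_univ_succ]
  congr 1
  · rw [xnode_zero]
    exact zero_pow_eq e
  · have h1 : ∀ j : Fin h', xnode ζ j.succ ^ e = (ζ ^ e) ^ (j : ℕ) := by
      intro j; rw [xnode_succ, ← pow_mul, ← pow_mul, Nat.mul_comm]
    rw [Finset.sum_congr rfl fun j _ => h1 j]
    rw [Fin.sum_univ_eq_sum_range (fun n => (ζ ^ e) ^ n) h']
    by_cases hdvd : h' ∣ e
    · rw [if_pos hdvd]
      have h2 : ζ ^ e = 1 := (hζ.pow_eq_one_iff_dvd e).mpr hdvd
      simp [h2]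
    · rw [if_neg hdvd]
      have h2 : ζ ^ e ≠ 1 := fun hc => hdvd ((hζ.pow_eq_one_iff_dvd e).mp hc)
      rw [geom_sum_eq h2]
      have h3 : (ζ ^ e) ^ h' = 1 := by
        rw [← pow_mul, Nat.mul_comm, pow_mul, hζ.pow_eq_one, one_pow]
      rw [h3, sub_self, zero_div]

lemma dvd_two_cases {e : ℕ} (hh' : 0 < h') (h1 : 0 < e) (h2 : e ≤ 2 * h') (hd : h' ∣ e) :
    e = h' ∨ e = 2 * h' := by
  obtain ⟨k, rfl⟩ := hd
  have hk2 : k ≤ 2 := by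
    by_contra hk
    push_neg at hk
    have : h' * 3 ≤ h' * k := Nat.mul_le_mul_left h' hk
    omega
  interval_cases k <;> omega

end Concrete

section Gram

variable {F : Type*} [Field F] {h' : ℕ} {ζ : F}

lemma gram (hh' : 0 < h') (hζ : IsPrimitiveRoot ζ h') {β : F}
    (hlam : ((h' : ℕ) : F) ≠ 0) (hβ2 : β ^ 2 = -((h' : ℕ) : F)) :
    AbarM ζ (β / ((h' : ℕ) : F) - 1) h' * (AbarM ζ (β / ((h' : ℕ) : F) - 1) h')ᵀ
      = MexM β ((h' : ℕ) : F) h' := by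
  set lam : F := ((h' : ℕ) : F) with hlamdef
  set c : F := β / lam - 1 with hc
  ext r r'
  rw [Matrix.mul_apply]
  simp only [Matrix.transpose_apply, AbarM, MexM, Matrix.of_apply]
  have hrle : (r : ℕ) ≤ h' := by have := r.isLt; omega
  have hr'le : (r' : ℕ) ≤ h' := by have := r'.isLt; omega
  by_cases hr : (r : ℕ) = 0 <;> by_cases hr' : (r' : ℕ) = 0
  · -- both rows are the modified row
    have hsum : ∀ j : Fin (h'+1),
        (if (r : ℕ) = 0 then 1 + c * xnode ζ j ^ h' else xnode ζ j ^ (r : ℕ)) *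
        (if (r' : ℕ) = 0 then 1 + c * xnode ζ j ^ h' else xnode ζ j ^ (r' : ℕ)) =
        xnode ζ j ^ (0 : ℕ) + (2 * c) * xnode ζ j ^ h' + (c * c) * xnode ζ j ^ (h' + h') := by
      intro j
      rw [if_pos hr, if_pos hr', pow_add, pow_zero]
      ring
    rw [Finset.sum_congr rfl fun j _ => hsum j]
    rw [Finset.sum_add_distrib, Finset.sum_add_distrib, ← Finset.mul_sum, ← Finset.mul_sum]
    rw [Nsum hh' hζ, Nsum hh' hζ, Nsum hh' hζ]
    rw [if_pos rfl, if_neg hh'.ne', if_pos (dvd_zero h'), if_pos (dvd_refl h'),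
      if_neg (by omega : ¬ (h' + h' = 0)), if_pos (by exact ⟨2, by ring⟩ : h' ∣ h' + h')]
    rw [if_pos (Or.inl hr), if_neg (by omega : ¬ ((r:ℕ) + (r':ℕ) = h'))]
    rw [hc]
    field_simp
    rw [← hlamdef]
    linear_combination lam * hβ2
  · -- r modified, r' pure
    have hsum : ∀ j : Fin (h'+1),
        (if (r : ℕ) = 0 then 1 + c * xnode ζ j ^ h' else xnode ζ j ^ (r : ℕ)) *
        (if (r' : ℕ) = 0 then 1 + c * xnode ζ j ^ h' else xnode ζ j ^ (r' : ℕ)) =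
        xnode ζ j ^ (r' : ℕ) + c * xnode ζ j ^ (h' + (r' : ℕ)) := by
      intro j
      rw [if_pos hr, if_neg hr', pow_add]
      ring
    rw [Finset.sum_congr rfl fun j _ => hsum j]
    rw [Finset.sum_add_distrib, ← Finset.mul_sum, Nsum hh' hζ, Nsum hh' hζ]
    rw [if_neg hr', if_neg (by omega : ¬ (h' + (r' : ℕ) = 0))]
    rw [if_pos (Or.inl hr)]
    by_cases hrh : (r' : ℕ) = h'
    · rw [if_pos (by exact ⟨1, by omega⟩ : h' ∣ (r' : ℕ)), if_pos (by exact ⟨2, by omega⟩ : h' ∣ h' + (r' : ℕ)),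
        if_pos (by omega : (r : ℕ) + (r' : ℕ) = h')]
      rw [hc]
      field_simp
      rw [hlamdef]; ring
    · have hnd : ¬ h' ∣ (r' : ℕ) := by
        intro hdvd
        have := Nat.le_of_dvd (by omega) hdvd
        omega
      have hnd2 : ¬ h' ∣ (h' + (r' : ℕ)) := by
        intro hdvd
        exact hnd ((Nat.dvd_add_right (dvd_refl h')).mp hdvd)
      rw [if_neg hnd, if_neg hnd2, if_neg (by omega : ¬ ((r : ℕ) + (r' : ℕ) = h'))]
      ring
  · -- r pure, r' modified
    have hsum : ∀ j : Fin (h'+1),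
        (if (r : ℕ) = 0 then 1 + c * xnode ζ j ^ h' else xnode ζ j ^ (r : ℕ)) *
        (if (r' : ℕ) = 0 then 1 + c * xnode ζ j ^ h' else xnode ζ j ^ (r' : ℕ)) =
        xnode ζ j ^ (r : ℕ) + c * xnode ζ j ^ (h' + (r : ℕ)) := by
      intro j
      rw [if_neg hr, if_pos hr', pow_add]
      ring
    rw [Finset.sum_congr rfl fun j _ => hsum j]
    rw [Finset.sum_add_distrib, ← Finset.mul_sum, Nsum hh' hζ, Nsum hh' hζ]
    rw [if_neg hr, if_neg (by omega : ¬ (h' + (r : ℕ) = 0))]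
    rw [if_pos (Or.inr hr')]
    by_cases hrh : (r : ℕ) = h'
    · rw [if_pos (by exact ⟨1, by omega⟩ : h' ∣ (r : ℕ)), if_pos (by exact ⟨2, by omega⟩ : h' ∣ h' + (r : ℕ)),
        if_pos (by omega : (r : ℕ) + (r' : ℕ) = h')]
      rw [hc]
      field_simp
      rw [hlamdef]; ring
    · have hnd : ¬ h' ∣ (r : ℕ) := by
        intro hdvd
        have := Nat.le_of_dvd (by omega) hdvd
        omega
      have hnd2 : ¬ h' ∣ (h' + (r : ℕ)) := by
        intro hdvd
        exact hnd ((Nat.dvd_add_right (dvd_refl h')).mp hdvd)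
      rw [if_neg hnd, if_neg hnd2, if_neg (by omega : ¬ ((r : ℕ) + (r' : ℕ) = h'))]
      ring
  · -- both pure
    have hsum : ∀ j : Fin (h'+1),
        (if (r : ℕ) = 0 then 1 + c * xnode ζ j ^ h' else xnode ζ j ^ (r : ℕ)) *
        (if (r' : ℕ) = 0 then 1 + c * xnode ζ j ^ h' else xnode ζ j ^ (r' : ℕ)) =
        xnode ζ j ^ ((r : ℕ) + (r' : ℕ)) := by
      intro j
      rw [if_neg hr, if_neg hr', pow_add]
    rw [Finset.sum_congr rfl fun j _ => hsum j, Nsum hh' hζ]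
    rw [if_neg (by omega : ¬ ((r : ℕ) + (r' : ℕ) = 0)), zero_add]
    rw [if_neg (by omega : ¬ ((r : ℕ) = 0 ∨ (r' : ℕ) = 0))]
    by_cases hdvd : h' ∣ (r : ℕ) + (r' : ℕ)
    · rw [if_pos hdvd]
      rcases dvd_two_cases hh' (by omega) (by omega) hdvd with hcase | hcase
      · rw [if_pos (Or.inl hcase)]
      · rw [if_pos (Or.inr ⟨by omega, by omega⟩)]
    · rw [if_neg hdvd, if_neg]
      rintro (hcase | ⟨hc1, hc2⟩)
      · exact hdvd ⟨1, by omega⟩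
      · exact hdvd ⟨2, by omega⟩

end Gram

lemma TMx_eval {F : Type*} [Field F] (β lam : F) (h' : ℕ) (a b : Fin (h'+1)) :
    TMx β lam h' a b = if (a : ℕ) = 0 ∧ (b : ℕ) = 0 then 1
    else if ((a : ℕ) = 0 ∧ (b : ℕ) = h') ∨ ((a : ℕ) = h' ∧ (b : ℕ) = 0) then -(β/lam)
    else if (a : ℕ) + (b : ℕ) = h' ∧ (a : ℕ) ≠ 0 ∧ (b : ℕ) ≠ 0 then lam⁻¹ else 0 := rfl

lemma MexM_eval {F : Type*} [Field F] (β lam : F) (h' : ℕ) (r r' : Fin (h'+1)) :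
    MexM β lam h' r r' = if (r : ℕ) = 0 ∨ (r' : ℕ) = 0 then
      (if (r : ℕ) + (r' : ℕ) = h' then β else 0)
    else (if (r : ℕ) + (r' : ℕ) = h' ∨ ((r : ℕ) = h' ∧ (r' : ℕ) = h') then lam else 0) := rfl

section TMex

variable {F : Type*} [Field F] {h' : ℕ}

lemma tmex (hh' : 0 < h') {β lam : F} (hlam : lam ≠ 0) (hβ2 : β ^ 2 = -lam) :
    TMx β lam h' * MexM β lam h' = 1 := by
  have hβlam : β * β = -lam := by rw [← pow_two]; exact hβ2
  set i0 : Fin (h'+1) := ⟨0, by omega⟩ with hi0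
  set ih : Fin (h'+1) := ⟨h', by omega⟩ with hih
  have hi0v : (i0 : ℕ) = 0 := rfl
  have hihv : (ih : ℕ) = h' := rfl
  ext a b
  rw [Matrix.mul_apply, Matrix.one_apply]
  have hale : (a : ℕ) ≤ h' := by have := a.isLt; omega
  have hble : (b : ℕ) ≤ h' := by have := b.isLt; omega
  by_cases ha0 : (a : ℕ) = 0
  · -- row 0 of T : supported on i0 and ih
    rw [sum_two (fun k => TMx β lam h' a k * MexM β lam h' k b) i0 ih
      (Fin.ne_of_val_ne (by omega))
      (fun k hk1 hk2 => by
        have hk0 : ¬ (k : ℕ) = 0 := fun hc => hk1 (Fin.ext (by omega))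
        have hkh : ¬ (k : ℕ) = h' := fun hc => hk2 (Fin.ext (by omega))
        have hT : TMx β lam h' a k = 0 := by
          rw [TMx_eval, if_neg (by omega), if_neg (by omega), if_neg (by omega)]
        show TMx β lam h' a k * MexM β lam h' k b = 0
        rw [hT, zero_mul])]
    have hT1 : TMx β lam h' a i0 = 1 := by
      rw [TMx_eval, if_pos ⟨ha0, hi0v⟩]
    have hT2 : TMx β lam h' a ih = -(β/lam) := by
      rw [TMx_eval, if_neg (by omega), if_pos (Or.inl ⟨ha0, hihv⟩)]
    rw [hT1, hT2, one_mul]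
    by_cases hb0 : (b : ℕ) = 0
    · rw [if_pos (Fin.ext (by omega : (a : ℕ) = (b : ℕ)))]
      have hM1 : MexM β lam h' i0 b = 0 := by
        rw [MexM_eval, if_pos (Or.inl hi0v), if_neg (by omega)]
      have hM2 : MexM β lam h' ih b = β := by
        rw [MexM_eval, if_pos (Or.inr hb0), if_pos (by omega)]
      rw [hM1, hM2]
      field_simp
      first | linear_combination hβlam | linear_combination -hβlam | linarith [hβlam]
    · by_cases hbh : (b : ℕ) = h'
      · rw [if_neg (Fin.ne_of_val_ne (by omega))]
        have hM1 : MexM β lam h' i0 b = β := by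
          rw [MexM_eval, if_pos (Or.inl hi0v), if_pos (by omega)]
        have hM2 : MexM β lam h' ih b = lam := by
          rw [MexM_eval, if_neg (by omega), if_pos (Or.inr ⟨hihv, hbh⟩)]
        rw [hM1, hM2]
        field_simp
        ring
      · rw [if_neg (Fin.ne_of_val_ne (by omega))]
        have hM1 : MexM β lam h' i0 b = 0 := by
          rw [MexM_eval, if_pos (Or.inl hi0v), if_neg (by omega)]
        have hM2 : MexM β lam h' ih b = 0 := by
          rw [MexM_eval, if_neg (by omega), if_neg (by omega)]
        rw [hM1, hM2]
        ring
  · by_cases hah : (a : ℕ) = h'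
    · -- last row of T : supported on i0
      rw [Finset.sum_eq_single_of_mem i0 (Finset.mem_univ _)
        (fun k _ hk => by
          have hk0 : ¬ (k : ℕ) = 0 := fun hc => hk (Fin.ext (by omega))
          have hT : TMx β lam h' a k = 0 := by
            rw [TMx_eval, if_neg (by omega), if_neg (by omega), if_neg (by omega)]
          rw [hT, zero_mul])]
      have hT1 : TMx β lam h' a i0 = -(β/lam) := by
        rw [TMx_eval, if_neg (by omega), if_pos (Or.inr ⟨hah, hi0v⟩)]
      rw [hT1]
      by_cases hb0 : (b : ℕ) = 0
      · rw [if_neg (Fin.ne_of_val_ne (by omega))]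
        have hM1 : MexM β lam h' i0 b = 0 := by
          rw [MexM_eval, if_pos (Or.inl hi0v), if_neg (by omega)]
        rw [hM1]
        ring
      · by_cases hbh : (b : ℕ) = h'
        · rw [if_pos (Fin.ext (by omega : (a : ℕ) = (b : ℕ)))]
          have hM1 : MexM β lam h' i0 b = β := by
            rw [MexM_eval, if_pos (Or.inl hi0v), if_pos (by omega)]
          rw [hM1]
          field_simp
          first | linear_combination hβlam | linear_combination -hβlam | linarith [hβlam]
        · rw [if_neg (Fin.ne_of_val_ne (by omega))]
          have hM1 : MexM β lam h' i0 b = 0 := by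
            rw [MexM_eval, if_pos (Or.inl hi0v), if_neg (by omega)]
          rw [hM1]
          ring
    · -- middle row of T : supported on km := h' - a
      set km : Fin (h'+1) := ⟨h' - (a : ℕ), by omega⟩ with hkm
      have hkmv : (km : ℕ) = h' - (a : ℕ) := rfl
      rw [Finset.sum_eq_single_of_mem km (Finset.mem_univ _)
        (fun k _ hk => by
          have hkk : ¬ (k : ℕ) = h' - (a : ℕ) := fun hc => hk (Fin.ext (by omega))
          have hT : TMx β lam h' a k = 0 := by
            rw [TMx_eval, if_neg (by omega), if_neg (by omega), if_neg (by omega)]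
          rw [hT, zero_mul])]
      have hT1 : TMx β lam h' a km = lam⁻¹ := by
        rw [TMx_eval, if_neg (by omega), if_neg (by omega), if_pos ⟨by omega, by omega, by omega⟩]
      rw [hT1]
      by_cases hba : (b : ℕ) = (a : ℕ)
      · rw [if_pos (Fin.ext (by omega : (a : ℕ) = (b : ℕ)))]
        have hM1 : MexM β lam h' km b = lam := by
          rw [MexM_eval, if_neg (by omega), if_pos (Or.inl (by omega))]
        rw [hM1, inv_mul_cancel₀ hlam]
      · rw [if_neg (Fin.ne_of_val_ne (by omega))]
        have hM1 : MexM β lam h' km b = 0 := by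
          rw [MexM_eval]
          by_cases hb0 : (b : ℕ) = 0
          · rw [if_pos (Or.inr hb0), if_neg (by omega)]
          · rw [if_neg (by omega), if_neg (by omega)]
        rw [hM1]
        ring

end TMex

section NSC

variable {F : Type*} [Field F] {h' : ℕ} {ζ : F}

lemma nsc_concrete (hh' : 0 < h') (hζ : IsPrimitiveRoot ζ h') {c : F}
    (hc1 : 1 + c ≠ 0) {s : ℕ} (hsh : s ≤ h' + 1) :
    IsNSC (Matrix.of fun (i : Fin s) (j : Fin (h'+1)) =>
      AbarM ζ c h' (Fin.castLE hsh i) j) := by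
  intro i hi hipos csel hcsel
  obtain ⟨i', rfl⟩ : ∃ i'', i = i'' + 1 := ⟨i - 1, by omega⟩
  set D : Matrix (Fin (i'+1)) (Fin (i'+1)) F := Matrix.of fun r t =>
    if (r : ℕ) = 0 then 1 + c * xnode ζ (csel t) ^ h' else xnode ζ (csel t) ^ (r : ℕ)
    with hD
  have hmat : (Matrix.of fun (r t : Fin (i'+1)) =>
      (Matrix.of fun (a : Fin s) (j : Fin (h'+1)) => AbarM ζ c h' (Fin.castLE hsh a) j)
        (Fin.castLE hi r) (csel t)) = D := by
    ext r t
    simp only [Matrix.of_apply, AbarM, Fin.coe_castLE, hD]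
  rw [hmat]
  by_cases hc0 : csel 0 = 0
  · -- column zero is the zero node: expand along the first column
    rw [Matrix.det_succ_column_zero]
    rw [Finset.sum_eq_single_of_mem (0 : Fin (i'+1)) (Finset.mem_univ _)
      (fun r _ hr => by
        have hr0 : (r : ℕ) ≠ 0 := fun hx => hr (Fin.ext hx)
        have hD0 : D r 0 = 0 := by
          simp only [hD, Matrix.of_apply]
          rw [if_neg hr0, hc0, xnode_zero, zero_pow hr0]
        rw [hD0, mul_zero, zero_mul])]
    have hD00 : D 0 0 = 1 := by
      simp only [hD, Matrix.of_apply, Fin.val_zero, reduceIte]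
      rw [hc0, xnode_zero, zero_pow hh'.ne', mul_zero, add_zero]
    rw [hD00]
    simp only [Fin.val_zero, pow_zero, one_mul]
    -- remaining: the minor
    have hcne : ∀ t : Fin i', csel t.succ ≠ 0 := by
      intro t hx
      have h1 : csel 0 < csel t.succ := hcsel (Fin.succ_pos t)
      rw [hc0, hx] at h1
      exact lt_irrefl _ h1
    have hsub : D.submatrix (Fin.succAbove 0) Fin.succ = Matrix.of
        (fun (r t : Fin i') => xnode ζ (csel t.succ) * xnode ζ (csel t.succ) ^ (r : ℕ)) := by
      ext r t
      simp only [Matrix.submatrix_apply, hD, Matrix.of_apply, Fin.succAbove_zero]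
      rw [if_neg (by simp [Fin.val_succ]), Fin.val_succ, pow_succ']
    have key : (Matrix.of fun (r t : Fin i') =>
        xnode ζ (csel t.succ) * xnode ζ (csel t.succ) ^ (r : ℕ)).det
        = (∏ t : Fin i', xnode ζ (csel t.succ)) *
          (Matrix.of fun (r t : Fin i') => xnode ζ (csel t.succ) ^ (r : ℕ)).det :=
      Matrix.det_mul_row _ _
    rw [hsub, key]
    refine mul_ne_zero (Finset.prod_ne_zero_iff.mpr fun t _ =>
      xnode_ne_zero hh' hζ (hcne t)) ?_
    have hvdm : (Matrix.of fun (r t : Fin i') => xnode ζ (csel t.succ) ^ (r : ℕ)) =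
        (Matrix.vandermonde fun t : Fin i' => xnode ζ (csel t.succ))ᵀ := by
      ext r t
      simp [Matrix.vandermonde]
    rw [hvdm, Matrix.det_transpose]
    have hsm : StrictMono fun t : Fin i' => csel t.succ :=
      fun a b hab => hcsel (Fin.succ_lt_succ_iff.mpr hab)
    exact Matrix.det_vandermonde_ne_zero_iff.mpr ((xnode_inj hh' hζ).comp hsm.injective)
  · -- no zero node among the columns
    have hcol : ∀ t, csel t ≠ 0 := by
      intro t hx
      apply hc0
      have h1 : csel 0 ≤ csel t := hcsel.monotone (Fin.zero_le t)
      rw [hx] at h1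
      exact Fin.le_zero_iff.mp h1
    set W : Matrix (Fin (i'+1)) (Fin (i'+1)) F :=
      Matrix.of fun r t => xnode ζ (csel t) ^ (r : ℕ) with hW
    have hDW : D = W.updateRow 0 ((1 + c) • fun _ => (1 : F)) := by
      ext r t
      by_cases hr : r = (0 : Fin (i'+1))
      · subst hr
        rw [Matrix.updateRow_self]
        simp only [hD, Matrix.of_apply, Pi.smul_apply, smul_eq_mul, mul_one, Fin.val_zero,
          reduceIte]
        rw [xnode_pow_h' hh' hζ (hcol t), mul_one]
      · rw [Matrix.updateRow_ne hr]
        simp only [hD, hW, Matrix.of_apply]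
        rw [if_neg (show ¬ (r : ℕ) = 0 from fun hx => hr (Fin.ext hx))]
    rw [hDW, Matrix.det_updateRow_smul]
    have hWr : W.updateRow 0 (fun _ => (1 : F)) = W := by
      have h1 : (fun _ : Fin (i'+1) => (1 : F)) = W 0 := by
        funext t
        simp only [hW, Matrix.of_apply, Fin.val_zero, pow_zero]
      rw [h1, Matrix.updateRow_eq_self]
    rw [hWr]
    refine mul_ne_zero hc1 ?_
    have hvdm : W = (Matrix.vandermonde fun t : Fin (i'+1) => xnode ζ (csel t))ᵀ := by
      ext r t
      simp [hW, Matrix.vandermonde]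
    rw [hvdm, Matrix.det_transpose]
    exact Matrix.det_vandermonde_ne_zero_iff.mpr
      ((xnode_inj hh' hζ).comp hcsel.injective)

end NSC

section Dist

variable {F : Type*} [Field F] [DecidableEq F]

lemma dist_bound {s h m : ℕ} (hsh : s ≤ h)
    (C : Fin s → Submodule F (Fin m → F)) (d : Fin s → ℕ)
    (hd : ∀ i, dminS ((C i : Set (Fin m → F))) = d i)
    (A : Matrix (Fin s) (Fin h) F) (hA : IsNSC A)
    (hex : ∃ c ∈ mpcSet (fun i => ((C i : Set (Fin m → F)))) A, c ≠ 0) :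
    sInf { v | ∃ i : Fin s, v = (h - (i : ℕ)) * d i } ≤
      dminS (mpcSet (fun i => ((C i : Set (Fin m → F)))) A) := by
  classical
  obtain ⟨c₀, hc₀, hc₀ne⟩ := hex
  refine le_csInf ⟨hammingNorm c₀, ⟨c₀, hc₀, hc₀ne, rfl⟩⟩ ?_
  rintro w ⟨c, hc, hcne, rfl⟩
  obtain ⟨v, hv, hform⟩ := hc
  -- the largest index with nonzero component
  have hvex : ∃ i : Fin s, v i ≠ 0 := by
    by_contra hno
    push_neg at hno
    apply hcne
    funext x
    rw [hform x]
    simp [hno]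
  set Iset : Finset (Fin s) := Finset.univ.filter (fun i => v i ≠ 0) with hIset
  have hIne : Iset.Nonempty := by
    obtain ⟨i, hi⟩ := hvex
    exact ⟨i, Finset.mem_filter.mpr ⟨Finset.mem_univ i, hi⟩⟩
  set t : Fin s := Iset.max' hIne with ht
  have hvt : v t ≠ 0 := by
    have h1 := Iset.max'_mem hIne
    exact (Finset.mem_filter.mp h1).2
  have hle : ∀ i : Fin s, v i ≠ 0 → i ≤ t := by
    intro i hi
    exact Finset.le_max' Iset i (Finset.mem_filter.mpr ⟨Finset.mem_univ i, hi⟩)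
  have hts : (t : ℕ) + 1 ≤ s := t.isLt
  -- per-coordinate claim
  have key : ∀ y : Fin m, v t y ≠ 0 →
      h - (t : ℕ) ≤ (Finset.univ.filter fun j : Fin h => c (j, y) ≠ 0).card := by
    intro y hy
    by_contra hlt
    push_neg at hlt
    have hcards := Finset.card_filter_add_card_filter_not
      (s := (Finset.univ : Finset (Fin h))) (p := fun j : Fin h => c (j, y) = 0)
    simp only [Finset.card_univ, Fintype.card_fin] at hcards
    have hZcard : (t : ℕ) + 1 ≤ (Finset.univ.filter fun j : Fin h => c (j, y) = 0).card := by
      have hco : (Finset.univ.filter fun j : Fin h => ¬ c (j, y) = 0) =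
          (Finset.univ.filter fun j : Fin h => c (j, y) ≠ 0) := by
        rfl
      rw [hco] at hcards
      omega
    obtain ⟨Z', hZ'sub, hZ'card⟩ := Finset.exists_subset_card_eq hZcard
    set e : Fin ((t : ℕ) + 1) → Fin h := fun r => ((Z'.orderIsoOfFin hZ'card) r : Fin h)
      with he
    have hemono : StrictMono e := fun a b hab => (Z'.orderIsoOfFin hZ'card).strictMono hab
    have hdet := hA ((t : ℕ) + 1) hts (Nat.succ_pos _) e hemono
    set u : Fin ((t : ℕ) + 1) → F := fun r => v (Fin.castLE hts r) y with hu
    have hvecmul : Matrix.vecMul u (Matrix.of fun r t' => A (Fin.castLE hts r) (e t')) = 0 := by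
      funext t'
      show ∑ r, u r * A (Fin.castLE hts r) (e t') = 0
      have h1 : ∑ r, u r * A (Fin.castLE hts r) (e t') = ∑ i : Fin s, v i y * A i (e t') := by
        refine (sum_castLE hts (fun i => v i y * A i (e t')) (fun i hi => ?_)).symm
        have : v i = 0 := by
          by_contra hvi
          have := hle i hvi
          have : (i : ℕ) ≤ (t : ℕ) := this
          omega
        show v i y * A i (e t') = 0
        rw [this]
        simp
      rw [h1]
      have h2 : ∑ i : Fin s, v i y * A i (e t') = c (e t', y) := by
        rw [hform (e t', y)]
        exact Finset.sum_congr rfl fun i _ => by ring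
      rw [h2]
      have : e t' ∈ Z' := ((Z'.orderIsoOfFin hZ'card) t').2
      have := hZ'sub this
      simp only [Finset.mem_filter] at this
      exact this.2
    have hu0 : u = 0 := Matrix.eq_zero_of_vecMul_eq_zero hdet hvecmul
    apply hy
    have := congrFun hu0 (Fin.last (t : ℕ))
    have hcast : Fin.castLE hts (Fin.last (t : ℕ)) = t := Fin.ext rfl
    rw [hu] at this
    simpa [hcast] using this
  -- summing up
  have hsplit : hammingNorm c =
      ∑ y : Fin m, (Finset.univ.filter fun j : Fin h => c (j, y) ≠ 0).card := by
    show (Finset.univ.filter fun x : Fin h × Fin m => c x ≠ 0).card = _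
    rw [Finset.card_filter]
    rw [Fintype.sum_prod_type]
    rw [Finset.sum_comm]
    exact Finset.sum_congr rfl fun y _ => (Finset.card_filter _ _).symm
  have hnorm_vt : hammingNorm (v t) =
      (Finset.univ.filter fun y : Fin m => v t y ≠ 0).card := rfl
  have hstep : (h - (t : ℕ)) * hammingNorm (v t) ≤ hammingNorm c := by
    rw [hsplit, hnorm_vt]
    calc (h - (t : ℕ)) * (Finset.univ.filter fun y : Fin m => v t y ≠ 0).card
        = ∑ _y ∈ (Finset.univ.filter fun y : Fin m => v t y ≠ 0), (h - (t : ℕ)) := by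
          rw [Finset.sum_const, smul_eq_mul, Nat.mul_comm]
      _ ≤ ∑ y ∈ (Finset.univ.filter fun y : Fin m => v t y ≠ 0),
            (Finset.univ.filter fun j : Fin h => c (j, y) ≠ 0).card := by
          refine Finset.sum_le_sum fun y hy => ?_
          exact key y (by simpa using (Finset.mem_filter.mp hy).2)
      _ ≤ ∑ y : Fin m, (Finset.univ.filter fun j : Fin h => c (j, y) ≠ 0).card :=
          Finset.sum_le_sum_of_subset (Finset.filter_subset _ _)
  have hdt : d t ≤ hammingNorm (v t) := by
    rw [← hd t]
    exact Nat.sInf_le ⟨v t, hv t, hvt, rfl⟩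
  calc sInf { w | ∃ i : Fin s, w = (h - (i : ℕ)) * d i }
      ≤ (h - (t : ℕ)) * d t := Nat.sInf_le ⟨t, rfl⟩
    _ ≤ (h - (t : ℕ)) * hammingNorm (v t) := Nat.mul_le_mul_left _ hdt
    _ ≤ hammingNorm c := hstep

end Dist

end Stmt12Aux

open Stmt12Aux Matrix

/-- existence of an NSC `s×h` matrix giving a Euclidean dual-containing
matrix-product code, when `h-1 ∣ q-1`, `1-h` is a square and `s ≤ h < 2s`. -/
theorem stmt12 {F : Type*} [Field F] [Fintype F] [DecidableEq F] {q h s m : ℕ}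
    (hchar : Odd (ringChar F)) (hcard : Fintype.card F = q)
    (hs : 0 < s) (hsh : s ≤ h) (hh2s : h < 2 * s)
    (hdvd : (h - 1) ∣ (q - 1)) (hsq : ∃ β : F, β ^ 2 = 1 - (h : F))
    (C : Fin s → Submodule F (Fin m → F)) (k d : Fin s → ℕ)
    (hnz : ∀ i, C i ≠ ⊥)
    (hk : ∀ i, Module.finrank F (C i) = k i)
    (hd : ∀ i, dminS ((C i : Set (Fin m → F))) = d i)
    (hnest : ∀ i j : Fin s, h - s ≤ (i : ℕ) → i ≤ j → C j ≤ C i)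
    (hlast : ∀ i : Fin s, (i : ℕ) = s - 1 →
      dualE ((C i : Set (Fin m → F))) ⊆ (C i : Set (Fin m → F)))
    (hfull : ∀ i : Fin s, (i : ℕ) < h - s → C i = ⊤) :
    ∃ A : Matrix (Fin s) (Fin h) F, IsNSC A ∧
      ∃ S : Submodule F (Fin h × Fin m → F),
        (S : Set (Fin h × Fin m → F)) = mpcSet (fun i => (C i : Set (Fin m → F))) A ∧
        dualE (S : Set (Fin h × Fin m → F)) ⊆ (S : Set (Fin h × Fin m → F)) ∧
        Module.finrank F S = ∑ i, k i ∧
        sInf { v | ∃ i : Fin s, v = (h - (i : ℕ)) * d i } ≤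
          dminS ((S : Set (Fin h × Fin m → F))) := by
  classical
  obtain ⟨β, hβ⟩ := hsq
  -- the general inclusion pattern
  have hincl : ∀ kk ii : Fin h, (kk : ℕ) + (ii : ℕ) ≤ h - 1 →
      dualE ((Cb C ii : Set (Fin m → F))) ⊆
        ((Cb C kk : Submodule F (Fin m → F)) : Set (Fin m → F)) := by
    intro kk ii hki
    have hkk := kk.isLt
    have hii := ii.isLt
    by_cases his : (ii : ℕ) < s
    · by_cases hifull : (ii : ℕ) < h - s
      · have hCi : Cb C ii = ⊤ := by
          rw [Cb, dif_pos his]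
          exact hfull ⟨ii, his⟩ hifull
        intro x hx
        rw [hCi] at hx
        have hx0 : x = 0 := dualE_top hx
        rw [hx0]
        exact Submodule.zero_mem _
      · have hks : (kk : ℕ) < s := by omega
        have hCi : Cb C ii = C ⟨ii, his⟩ := by rw [Cb, dif_pos his]
        have hCk : Cb C kk = C ⟨kk, hks⟩ := by rw [Cb, dif_pos hks]
        rw [hCi, hCk]
        have hslt : s - 1 < s := by omega
        have h1 : C ⟨s - 1, hslt⟩ ≤ C ⟨ii, his⟩ :=
          hnest ⟨ii, his⟩ ⟨s - 1, hslt⟩ (not_lt.mp hifull) (Fin.mk_le_mk.mpr (by omega))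
        have h2 : dualE ((C ⟨ii, his⟩ : Set (Fin m → F))) ⊆
            (C ⟨s - 1, hslt⟩ : Set (Fin m → F)) :=
          fun x hx => hlast ⟨s - 1, hslt⟩ rfl (dualE_antitone h1 hx)
        by_cases hkfull : (kk : ℕ) < h - s
        · have : C ⟨kk, hks⟩ = ⊤ := hfull ⟨kk, hks⟩ hkfull
          rw [this]
          intro x _
          exact Submodule.mem_top
        · have h3 : C ⟨s - 1, hslt⟩ ≤ C ⟨kk, hks⟩ :=
            hnest ⟨kk, hks⟩ ⟨s - 1, hslt⟩ (not_lt.mp hkfull) (Fin.mk_le_mk.mpr (by omega))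
          exact fun x hx => h3 (h2 hx)
    · have hCi : Cb C ii = ⊥ := Cb_bot C ii (by omega)
      have hks : (kk : ℕ) < s := by omega
      have hCk : Cb C kk = ⊤ := by
        rw [Cb, dif_pos hks]
        exact hfull ⟨kk, hks⟩ (by show (kk : ℕ) < h - s; omega)
      rw [hCk]
      intro x _
      exact Submodule.mem_top
  by_cases hone : h = 1
  · -- degenerate case h = s = 1
    subst hone
    have hs1 : s = 1 := by omega
    subst hs1
    set A : Matrix (Fin 1) (Fin 1) F := 1 with hAdef
    have hANSC : IsNSC A := by
      intro i hi hipos csel hcsel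
      have : i = 1 := by omega
      subst this
      have h00 : A (Fin.castLE hi 0) (csel 0) = 1 := by
        rw [Subsingleton.elim (Fin.castLE hi (0 : Fin 1)) (csel 0), hAdef, Matrix.one_apply_eq]
      rw [Matrix.det_fin_one, Matrix.of_apply, h00]
      exact one_ne_zero
    have hpat : ∀ kk ii : Fin 1, (1 : Matrix (Fin 1) (Fin 1) F) kk ii ≠ 0 →
        dualE ((Cb C ii : Set (Fin m → F))) ⊆
          ((Cb C kk : Submodule F (Fin m → F)) : Set (Fin m → F)) := by
      intro kk ii _
      have := kk.isLt
      have := ii.isLt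
      exact hincl kk ii (by omega)
    obtain ⟨S, hSet, hdual, hrank⟩ := workhorse hs (le_refl 1) C A (1 : Matrix (Fin 1) (Fin 1) F)
      (1 : Matrix (Fin 1) (Fin 1) F) (by rw [hAdef]; simp) (by rw [hAdef]; simp) hpat A
      (fun i j => by rw [show Fin.castLE (le_refl 1) i = i from Fin.ext rfl])
    -- a nonzero codeword
    have hrow : ∀ j : Fin 1, A ⟨0, hs⟩ j ≠ 0 := by
      intro j
      have hsm : StrictMono (fun _ : Fin 1 => j) :=
        fun a b hab => absurd (Subsingleton.elim a b) (ne_of_lt hab)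
      have hdet := hANSC 1 hs Nat.one_pos (fun _ => j) hsm
      rw [Matrix.det_fin_one, Matrix.of_apply] at hdet
      rwa [show Fin.castLE hs (0 : Fin 1) = (⟨0, hs⟩ : Fin 1) from Fin.ext rfl] at hdet
    obtain ⟨v0, hv0m, hv0⟩ := Submodule.exists_mem_ne_zero_of_ne_bot (hnz ⟨0, hs⟩)
    obtain ⟨y0, hy0⟩ : ∃ y, v0 y ≠ 0 := by
      by_contra hno
      push_neg at hno
      exact hv0 (funext fun y => hno y)
    have hex : ∃ c ∈ mpcSet (fun i => ((C i : Set (Fin m → F)))) A, c ≠ 0 := by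
      refine ⟨fun x => A ⟨0, hs⟩ x.1 * v0 x.2,
        ⟨fun i => if i = ⟨0, hs⟩ then v0 else 0, fun i => ?_, fun x => ?_⟩, ?_⟩
      · by_cases hi : i = ⟨0, hs⟩
        · subst hi
          simpa using hv0m
        · simp only [if_neg hi]
          exact Submodule.zero_mem _
      · rw [Finset.sum_eq_single_of_mem (⟨0, hs⟩ : Fin 1) (Finset.mem_univ _)
          (fun i _ hi => by
            show A i x.1 * (if i = ⟨0, hs⟩ then v0 else 0) x.2 = 0
            rw [if_neg hi]
            simp)]
        simp
      · intro hzero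
        have := congrFun hzero (⟨0, by omega⟩, y0)
        exact mul_ne_zero (hrow _) hy0 this
    refine ⟨A, hANSC, S, hSet, hdual, ?_, ?_⟩
    · rw [hrank]
      exact Finset.sum_congr rfl fun i _ => hk i
    · rw [hSet]
      exact dist_bound (le_refl 1) C d hd A hANSC hex
  · -- main case h ≥ 2
    obtain ⟨h', rfl⟩ : ∃ h'', h = h'' + 1 := ⟨h - 1, by omega⟩
    have hh' : 0 < h' := by omega
    have hq2 : 2 ≤ q := by
      rw [← hcard]
      exact Fintype.one_lt_card
    have hdvd' : h' ∣ q - 1 := by simpa using hdvd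
    -- the characteristic does not divide h'
    have hlam : ((h' : ℕ) : F) ≠ 0 := by
      intro h0
      set p := ringChar F with hp
      have hcharP : CharP F p := ringChar.charP F
      have hpdvd : p ∣ h' := (CharP.cast_eq_zero_iff F p h').mp h0
      obtain ⟨n, hpprime, hcardp⟩ := FiniteField.card F p
      have hpq : p ∣ q := by
        rw [← hcard, hcardp]
        exact dvd_pow_self p (by positivity)
      have hpq1 : p ∣ q - 1 := hpdvd.trans hdvd'
      have h1 : p ∣ 1 := by
        have := Nat.dvd_sub hpq hpq1
        rwa [show q - (q - 1) = 1 by omega] at this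
      exact hpprime.one_lt.ne' (Nat.dvd_one.mp h1)
    have hβ2 : β ^ 2 = -((h' : ℕ) : F) := by
      rw [hβ]
      push_cast
      ring
    have hβ0 : β ≠ 0 := by
      intro h0
      apply hlam
      rw [h0] at hβ2
      have h1 : -((h' : ℕ) : F) = 0 := by simpa using hβ2.symm
      exact neg_eq_zero.mp h1
    -- a primitive h'-th root of unity
    obtain ⟨g, hg⟩ := IsCyclic.exists_generator (α := Fˣ)
    have hog : orderOf g = q - 1 := by
      rw [orderOf_eq_card_of_forall_mem_zpowers hg, Nat.card_eq_fintype_card,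
        Fintype.card_units, hcard]
    obtain ⟨kq, hkq⟩ := hdvd'
    have hkqpos : 0 < kq := by
      rcases Nat.eq_zero_or_pos kq with h0 | h0
      · subst h0
        rw [Nat.mul_zero] at hkq
        omega
      · exact h0
    have hoζ : orderOf (g ^ kq) = h' := by
      rw [orderOf_pow, hog, hkq, Nat.gcd_eq_right ⟨h', by ring⟩, Nat.mul_div_cancel _ hkqpos]
    have hζu : IsPrimitiveRoot (g ^ kq) h' := hoζ ▸ IsPrimitiveRoot.orderOf (g ^ kq)
    have hζ : IsPrimitiveRoot (((g ^ kq : Fˣ) : F)) h' := IsPrimitiveRoot.coe_units_iff.mpr hζu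
    set ζ : F := ((g ^ kq : Fˣ) : F) with hζdef
    set lam : F := ((h' : ℕ) : F) with hlamdef
    set cval : F := β / ((h' : ℕ) : F) - 1 with hcval
    have hc1 : 1 + cval ≠ 0 := by
      rw [hcval]
      rw [show 1 + (β / ((h' : ℕ) : F) - 1) = β / ((h' : ℕ) : F) by ring]
      exact div_ne_zero hβ0 hlam
    set Abar : Matrix (Fin (h' + 1)) (Fin (h' + 1)) F := AbarM ζ cval h' with hAbar
    have hGram : Abar * Abarᵀ = MexM β lam h' := gram hh' hζ hlam hβ2
    have hTM : TMx β lam h' * (Abar * Abarᵀ) = 1 := by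
      rw [hGram]
      exact tmex hh' hlam hβ2
    have hMT : (Abar * Abarᵀ) * TMx β lam h' = 1 := mul_eq_one_comm.mp hTM
    have hAB : Abar * (Abarᵀ * TMx β lam h') = 1 := by
      rw [← Matrix.mul_assoc]
      exact hMT
    set A : Matrix (Fin s) (Fin (h' + 1)) F :=
      Matrix.of fun i j => Abar (Fin.castLE hsh i) j with hAdef
    have hANSC : IsNSC A := nsc_concrete hh' hζ hc1 hsh
    have hpat : ∀ kk ii : Fin (h' + 1), TMx β lam h' kk ii ≠ 0 →
        dualE ((Cb C ii : Set (Fin m → F))) ⊆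
          ((Cb C kk : Submodule F (Fin m → F)) : Set (Fin m → F)) := by
      intro kk ii hT
      have hkk := kk.isLt
      have hii := ii.isLt
      rw [TMx_eval] at hT
      split_ifs at hT with h1 h2 h3
      · exact hincl kk ii (by omega)
      · exact hincl kk ii (by omega)
      · exact hincl kk ii (by omega)
      · exact absurd rfl hT
    obtain ⟨S, hSet, hdual, hrank⟩ := workhorse hs hsh C Abar (Abarᵀ * TMx β lam h')
      (TMx β lam h') hAB hTM hpat A (fun i j => rfl)
    -- a nonzero codeword
    have hrow : ∀ j : Fin (h' + 1), A ⟨0, hs⟩ j ≠ 0 := by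
      intro j
      have hsm : StrictMono (fun _ : Fin 1 => j) :=
        fun a b hab => absurd (Subsingleton.elim a b) (ne_of_lt hab)
      have hdet := hANSC 1 hs Nat.one_pos (fun _ => j) hsm
      rw [Matrix.det_fin_one, Matrix.of_apply] at hdet
      rwa [show Fin.castLE hs (0 : Fin 1) = (⟨0, hs⟩ : Fin s) from Fin.ext rfl] at hdet
    obtain ⟨v0, hv0m, hv0⟩ := Submodule.exists_mem_ne_zero_of_ne_bot (hnz ⟨0, hs⟩)
    obtain ⟨y0, hy0⟩ : ∃ y, v0 y ≠ 0 := by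
      by_contra hno
      push_neg at hno
      exact hv0 (funext fun y => hno y)
    have hex : ∃ c ∈ mpcSet (fun i => ((C i : Set (Fin m → F)))) A, c ≠ 0 := by
      refine ⟨fun x => A ⟨0, hs⟩ x.1 * v0 x.2,
        ⟨fun i => if i = ⟨0, hs⟩ then v0 else 0, fun i => ?_, fun x => ?_⟩, ?_⟩
      · by_cases hi : i = ⟨0, hs⟩
        · subst hi
          simpa using hv0m
        · simp only [if_neg hi]
          exact Submodule.zero_mem _
      · rw [Finset.sum_eq_single_of_mem (⟨0, hs⟩ : Fin s) (Finset.mem_univ _)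
          (fun i _ hi => by
            show A i x.1 * (if i = ⟨0, hs⟩ then v0 else 0) x.2 = 0
            rw [if_neg hi]
            simp)]
        simp
      · intro hzero
        have := congrFun hzero (⟨0, by omega⟩, y0)
        exact mul_ne_zero (hrow _) hy0 this
    refine ⟨A, hANSC, S, hSet, hdual, ?_, ?_⟩
    · rw [hrank]
      exact Finset.sum_congr rfl fun i _ => hk i
    · rw [hSet]
      exact dist_bound hsh C d hd A hANSC hex
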